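/- Assume F(u) = F u + f is affine with F ∈ R^{O×D}, f ∈ R^O, prior N(μ_pr, Γ_pr) and noise N(μ_E, Γ_E) Gaussian with SPD covariances, and y ∈ R^O. Let α ∈ (0,1) and let (μ̂, Γ̂) with Γ̂ SPD be a stationary point of L_α(μ, Γ) = (1−α)(‖μ−μ_pr‖²_{Γ⁻¹} + tr(Γ⁻¹Γ_pr)) + α(‖μ−μ_pr‖²_{Γ_pr⁻¹} + tr(Γ_pr⁻¹Γ)) + α(‖y − μ_E − Fμ − f‖²_{Γ_E⁻¹} + tr(Γ_E⁻¹FΓFᵀ)). Define A = ((1−α)/α)((μ̂−μ_pr)(μ̂−μ_pr)ᵀ + Γ_pr), μ_post = ((1−α)/α) Γ_Lap Γ̂⁻¹ (μ̂ − μ_pr) + μ̂ and Γ_post = Γ̂ A⁻¹ Γ̂. Then μ_post = u_MAP and Γ_post = Γ_Lap, where Γ_Lap = (Fᵀ Γ_E⁻¹ F + Γ_pr⁻¹)⁻¹ and u_MAP = Γ_Lap(Fᵀ Γ_E⁻¹ (y − f − μ_E) + Γ_pr⁻¹ μ_pr). -/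

import Mathlib

open Matrix

attribute [local instance] Matrix.linftyOpNormedRing Matrix.linftyOpNormedAlgebra

lemma trace_mul_vecMulVec {n : ℕ} (M : Matrix (Fin n) (Fin n) ℝ) (a b : Fin n → ℝ) :
    (M * vecMulVec a b).trace = b ⬝ᵥ M *ᵥ a := by
  simp only [Matrix.trace, Matrix.diag_apply, Matrix.mul_apply, vecMulVec_apply,
    dotProduct, mulVec, Finset.mul_sum]
  refine Finset.sum_congr rfl fun i _ => Finset.sum_congr rfl fun j _ => by ring

noncomputable def traceCLM (n : ℕ) : Matrix (Fin n) (Fin n) ℝ →L[ℝ] ℝ :=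
  LinearMap.toContinuousLinearMap (Matrix.traceLinearMap (Fin n) ℝ ℝ)

lemma hasDerivAt_trace {n : ℕ} {M : ℝ → Matrix (Fin n) (Fin n) ℝ} {M' : Matrix (Fin n) (Fin n) ℝ}
    {t : ℝ} (h : HasDerivAt M M' t) :
    HasDerivAt (fun s => (M s).trace) M'.trace t := by
  have := (traceCLM n).hasFDerivAt.comp_hasDerivAt t h
  exact this

noncomputable def sandCLM {n m : ℕ} (P : Matrix (Fin m) (Fin n) ℝ) (Q : Matrix (Fin n) (Fin m) ℝ) :
    Matrix (Fin n) (Fin n) ℝ →L[ℝ] Matrix (Fin m) (Fin m) ℝ :=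
  LinearMap.toContinuousLinearMap
    { toFun := fun X => P * X * Q
      map_add' := by intros; simp [Matrix.mul_add, Matrix.add_mul]
      map_smul' := by intros; simp [Matrix.mul_smul, Matrix.smul_mul] }

lemma hasDerivAt_sandwich {n m : ℕ} (P : Matrix (Fin m) (Fin n) ℝ) (Q : Matrix (Fin n) (Fin m) ℝ)
    {M : ℝ → Matrix (Fin n) (Fin n) ℝ} {M' : Matrix (Fin n) (Fin n) ℝ} {t : ℝ}
    (h : HasDerivAt M M' t) :
    HasDerivAt (fun s => P * M s * Q) (P * M' * Q) t := by
  have := (sandCLM P Q).hasFDerivAt.comp_hasDerivAt t h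
  exact this

lemma hasDerivAt_matrix_inv {n : ℕ} {M : ℝ → Matrix (Fin n) (Fin n) ℝ}
    {M' : Matrix (Fin n) (Fin n) ℝ}
    {t : ℝ} (h : HasDerivAt M M' t) (hu : IsUnit (M t)) :
    HasDerivAt (fun s => (M s)⁻¹) (-((M t)⁻¹ * M' * (M t)⁻¹)) t := by
  haveI : CompleteSpace (Matrix (Fin n) (Fin n) ℝ) := FiniteDimensional.complete ℝ _
  have h1 : HasFDerivAt (Ring.inverse : Matrix (Fin n) (Fin n) ℝ → _)
      (-(ContinuousLinearMap.mulLeftRight ℝ _ ↑hu.unit⁻¹ ↑hu.unit⁻¹)) (M t) := by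
    have := hasFDerivAt_ringInverse (𝕜 := ℝ) hu.unit
    rwa [hu.unit_spec] at this
  have h2 := h1.comp_hasDerivAt t h
  have h3 : HasDerivAt (fun s => Ring.inverse (M s)) (-((M t)⁻¹ * M' * (M t)⁻¹)) t := by
    refine h2.congr_deriv ?_
    simp only [ContinuousLinearMap.neg_apply, ContinuousLinearMap.mulLeftRight_apply,
      Matrix.coe_units_inv, hu.unit_spec]
  have heq : (fun s => Ring.inverse (M s)) = fun s => (M s)⁻¹ :=
    funext fun s => (Matrix.nonsing_inv_eq_ringInverse _).symm
  rwa [heq] at h3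

lemma hasDerivAt_vecMulVec {n : ℕ} (a b : Fin n → ℝ) :
    HasDerivAt (fun t : ℝ => vecMulVec (a + t • b) (a + t • b))
      (vecMulVec a b + vecMulVec b a) 0 := by
  have hfun : (fun t : ℝ => vecMulVec (a + t • b) (a + t • b)) =
      fun t => vecMulVec a a + t • (vecMulVec a b + vecMulVec b a) + (t*t) • vecMulVec b b := by
    funext t; ext i j
    simp only [vecMulVec_apply, Matrix.add_apply, Matrix.smul_apply, Pi.add_apply,
      Pi.smul_apply, smul_eq_mul]
    ring
  rw [hfun]
  have h1 : HasDerivAt (fun t : ℝ => vecMulVec a a + t • (vecMulVec a b + vecMulVec b a))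
      (vecMulVec a b + vecMulVec b a) 0 := by
    exact (((hasDerivAt_id (0:ℝ)).smul_const (vecMulVec a b + vecMulVec b a)).const_add
      (vecMulVec a a)).congr_deriv (by simp)
  have h2 : HasDerivAt (fun t : ℝ => (t*t) • vecMulVec b b) (0 : Matrix (Fin n) (Fin n) ℝ) 0 := by
    exact (((hasDerivAt_id (0:ℝ)).mul (hasDerivAt_id (0:ℝ))).smul_const (vecMulVec b b)).congr_deriv (by simp)
  exact (h1.add h2).congr_deriv (by simp)

lemma key_deriv {D O : ℕ} (Fm : Matrix (Fin O) (Fin D) ℝ) (f y μE : Fin O → ℝ)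
    (μpr : Fin D → ℝ) (Γpr : Matrix (Fin D) (Fin D) ℝ)
    (ΓE : Matrix (Fin O) (Fin O) ℝ) (α : ℝ)
    (L : (Fin D → ℝ) × (Fin D → Fin D → ℝ) → ℝ)
    (hL : ∀ p : (Fin D → ℝ) × (Fin D → Fin D → ℝ),
      L p =
        (1 - α) * ((p.1 - μpr) ⬝ᵥ (Matrix.of p.2 * (Matrix.of p.2)ᵀ)⁻¹ *ᵥ (p.1 - μpr) +
            ((Matrix.of p.2 * (Matrix.of p.2)ᵀ)⁻¹ * Γpr).trace) +
        α * ((p.1 - μpr) ⬝ᵥ Γpr⁻¹ *ᵥ (p.1 - μpr) +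
            (Γpr⁻¹ * (Matrix.of p.2 * (Matrix.of p.2)ᵀ)).trace) +
        α * ((y - μE - Fm *ᵥ p.1 - f) ⬝ᵥ ΓE⁻¹ *ᵥ (y - μE - Fm *ᵥ p.1 - f) +
            (ΓE⁻¹ * Fm * (Matrix.of p.2 * (Matrix.of p.2)ᵀ) * Fmᵀ).trace))
    (μhat : Fin D → ℝ) (Chat : Fin D → Fin D → ℝ)
    (hstat : HasFDerivAt L (0 : ((Fin D → ℝ) × (Fin D → Fin D → ℝ)) →L[ℝ] ℝ) (μhat, Chat))
    (hGu : IsUnit (Matrix.of Chat * (Matrix.of Chat)ᵀ))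
    (h : Fin D → ℝ) (H : Matrix (Fin D) (Fin D) ℝ) :
    (1 - α) * ((-((Matrix.of Chat * (Matrix.of Chat)ᵀ)⁻¹ * (H * (Matrix.of Chat)ᵀ + Matrix.of Chat * Hᵀ) * (Matrix.of Chat * (Matrix.of Chat)ᵀ)⁻¹) * vecMulVec (μhat - μpr) (μhat - μpr) +
          (Matrix.of Chat * (Matrix.of Chat)ᵀ)⁻¹ * (vecMulVec (μhat - μpr) h + vecMulVec h (μhat - μpr))).trace +
        (-((Matrix.of Chat * (Matrix.of Chat)ᵀ)⁻¹ * (H * (Matrix.of Chat)ᵀ + Matrix.of Chat * Hᵀ) * (Matrix.of Chat * (Matrix.of Chat)ᵀ)⁻¹) * Γpr).trace) +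
    α * ((Γpr⁻¹ * (vecMulVec (μhat - μpr) h + vecMulVec h (μhat - μpr))).trace +
        (Γpr⁻¹ * (H * (Matrix.of Chat)ᵀ + Matrix.of Chat * Hᵀ)).trace) +
    α * ((ΓE⁻¹ * (vecMulVec (y - μE - Fm *ᵥ μhat - f) (-(Fm *ᵥ h)) + vecMulVec (-(Fm *ᵥ h)) (y - μE - Fm *ᵥ μhat - f))).trace +
        (ΓE⁻¹ * Fm * (H * (Matrix.of Chat)ᵀ + Matrix.of Chat * Hᵀ) * Fmᵀ).trace) = 0 := by
  set Cm : Matrix (Fin D) (Fin D) ℝ := Matrix.of Chat with hCm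
  set v : Fin D → ℝ := μhat - μpr with hv
  set r0 : Fin O → ℝ := y - μE - Fm *ᵥ μhat - f with hr0
  set b : Fin O → ℝ := -(Fm *ᵥ h) with hb
  set Hp : Fin D → Fin D → ℝ := Matrix.of.symm H with hHp
  set γ : ℝ → (Fin D → ℝ) × (Fin D → Fin D → ℝ) := fun t => (μhat + t • h, Chat + t • Hp)
    with hγdef
  have hγ : HasDerivAt γ (h, Hp) 0 := by
    have h1 : HasDerivAt (fun t : ℝ => μhat + t • h) h 0 := by
      simpa using ((hasDerivAt_id (0:ℝ)).smul_const h).const_add μhat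
    have h2 : HasDerivAt (fun t : ℝ => Chat + t • Hp) Hp 0 := by
      simpa using ((hasDerivAt_id (0:ℝ)).smul_const Hp).const_add Chat
    exact h1.prodMk h2
  have hA : HasDerivAt (fun t => L (γ t)) 0 0 := by
    have hstat' : HasFDerivAt L (0 : ((Fin D → ℝ) × (Fin D → Fin D → ℝ)) →L[ℝ] ℝ) (γ 0) := by
      have e : γ 0 = (μhat, Chat) := by simp [hγdef]
      rwa [e]
    exact (hstat'.comp_hasDerivAt 0 hγ).congr_deriv (by simp)
  -- rewrite L ∘ γ explicitly
  have hLγ : (fun t => L (γ t)) = fun t =>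
      (1 - α) * ((((Cm + t • H) * (Cm + t • H)ᵀ)⁻¹ * vecMulVec (v + t • h) (v + t • h)).trace +
          (((Cm + t • H) * (Cm + t • H)ᵀ)⁻¹ * Γpr).trace) +
      α * ((Γpr⁻¹ * vecMulVec (v + t • h) (v + t • h)).trace +
          (Γpr⁻¹ * ((Cm + t • H) * (Cm + t • H)ᵀ)).trace) +
      α * ((ΓE⁻¹ * vecMulVec (r0 + t • b) (r0 + t • b)).trace +
          (ΓE⁻¹ * Fm * ((Cm + t • H) * (Cm + t • H)ᵀ) * Fmᵀ).trace) := by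
    funext t
    rw [hL]
    have e1 : (γ t).1 - μpr = v + t • h := by
      simp only [hγdef, hv]
      abel
    have e2 : Matrix.of (γ t).2 = Cm + t • H := rfl
    have e3 : y - μE - Fm *ᵥ (γ t).1 - f = r0 + t • b := by
      simp only [hγdef, hr0, hb, Matrix.mulVec_add, Matrix.mulVec_smul]
      ext i
      simp only [Pi.add_apply, Pi.sub_apply, Pi.smul_apply, Pi.neg_apply, smul_eq_mul]
      ring
    rw [e1, e2, e3, ← trace_mul_vecMulVec, ← trace_mul_vecMulVec, ← trace_mul_vecMulVec]
  -- explicit derivative of each piece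
  have hC : HasDerivAt (fun t : ℝ => Cm + t • H) H 0 := by
    exact (((hasDerivAt_id (0:ℝ)).smul_const H).const_add Cm).congr_deriv (by simp)
  have hCT : HasDerivAt (fun t : ℝ => (Cm + t • H)ᵀ) Hᵀ 0 := by
    have e : (fun t : ℝ => (Cm + t • H)ᵀ) = fun t : ℝ => Cmᵀ + t • Hᵀ := by
      funext t; simp [Matrix.transpose_add, Matrix.transpose_smul]
    rw [e]
    exact (((hasDerivAt_id (0:ℝ)).smul_const Hᵀ).const_add Cmᵀ).congr_deriv (by simp)
  have hG : HasDerivAt (fun t : ℝ => (Cm + t • H) * (Cm + t • H)ᵀ) (H * Cmᵀ + Cm * Hᵀ) 0 := by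
    exact (hC.mul hCT).congr_deriv (by simp)
  have hGinv : HasDerivAt (fun t : ℝ => ((Cm + t • H) * (Cm + t • H)ᵀ)⁻¹)
      (-((Cm * Cmᵀ)⁻¹ * (H * Cmᵀ + Cm * Hᵀ) * (Cm * Cmᵀ)⁻¹)) 0 := by
    have h0 : ((Cm + (0:ℝ) • H) * (Cm + (0:ℝ) • H)ᵀ) = Cm * Cmᵀ := by simp
    have := hasDerivAt_matrix_inv hG (by rwa [h0])
    rwa [h0] at this
  have hW : HasDerivAt (fun t : ℝ => vecMulVec (v + t • h) (v + t • h))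
      (vecMulVec v h + vecMulVec h v) 0 := hasDerivAt_vecMulVec v h
  have hR : HasDerivAt (fun t : ℝ => vecMulVec (r0 + t • b) (r0 + t • b))
      (vecMulVec r0 b + vecMulVec b r0) 0 := hasDerivAt_vecMulVec r0 b
  have q1 : HasDerivAt
      (fun t : ℝ => (((Cm + t • H) * (Cm + t • H)ᵀ)⁻¹ * vecMulVec (v + t • h) (v + t • h)).trace)
      ((-((Cm * Cmᵀ)⁻¹ * (H * Cmᵀ + Cm * Hᵀ) * (Cm * Cmᵀ)⁻¹) * vecMulVec v v +
        (Cm * Cmᵀ)⁻¹ * (vecMulVec v h + vecMulVec h v)).trace) 0 := by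
    have := hasDerivAt_trace (hGinv.mul hW)
    simpa using this
  have t1 : HasDerivAt (fun t : ℝ => (((Cm + t • H) * (Cm + t • H)ᵀ)⁻¹ * Γpr).trace)
      ((-((Cm * Cmᵀ)⁻¹ * (H * Cmᵀ + Cm * Hᵀ) * (Cm * Cmᵀ)⁻¹) * Γpr).trace) 0 :=
    hasDerivAt_trace (hGinv.mul_const Γpr)
  have q2 : HasDerivAt (fun t : ℝ => (Γpr⁻¹ * vecMulVec (v + t • h) (v + t • h)).trace)
      ((Γpr⁻¹ * (vecMulVec v h + vecMulVec h v)).trace) 0 :=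
    hasDerivAt_trace (hW.const_mul Γpr⁻¹)
  have t2 : HasDerivAt (fun t : ℝ => (Γpr⁻¹ * ((Cm + t • H) * (Cm + t • H)ᵀ)).trace)
      ((Γpr⁻¹ * (H * Cmᵀ + Cm * Hᵀ)).trace) 0 :=
    hasDerivAt_trace (hG.const_mul Γpr⁻¹)
  have q3 : HasDerivAt (fun t : ℝ => (ΓE⁻¹ * vecMulVec (r0 + t • b) (r0 + t • b)).trace)
      ((ΓE⁻¹ * (vecMulVec r0 b + vecMulVec b r0)).trace) 0 :=
    hasDerivAt_trace (hR.const_mul ΓE⁻¹)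
  have t3 : HasDerivAt (fun t : ℝ => (ΓE⁻¹ * Fm * ((Cm + t • H) * (Cm + t • H)ᵀ) * Fmᵀ).trace)
      ((ΓE⁻¹ * Fm * (H * Cmᵀ + Cm * Hᵀ) * Fmᵀ).trace) 0 :=
    hasDerivAt_trace (hasDerivAt_sandwich (ΓE⁻¹ * Fm) Fmᵀ hG)
  have hB : HasDerivAt (fun t : ℝ =>
      (1 - α) * ((((Cm + t • H) * (Cm + t • H)ᵀ)⁻¹ * vecMulVec (v + t • h) (v + t • h)).trace +
          (((Cm + t • H) * (Cm + t • H)ᵀ)⁻¹ * Γpr).trace) +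
      α * ((Γpr⁻¹ * vecMulVec (v + t • h) (v + t • h)).trace +
          (Γpr⁻¹ * ((Cm + t • H) * (Cm + t • H)ᵀ)).trace) +
      α * ((ΓE⁻¹ * vecMulVec (r0 + t • b) (r0 + t • b)).trace +
          (ΓE⁻¹ * Fm * ((Cm + t • H) * (Cm + t • H)ᵀ) * Fmᵀ).trace))
      ((1 - α) * ((-((Cm * Cmᵀ)⁻¹ * (H * Cmᵀ + Cm * Hᵀ) * (Cm * Cmᵀ)⁻¹) * vecMulVec v v +
            (Cm * Cmᵀ)⁻¹ * (vecMulVec v h + vecMulVec h v)).trace +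
          (-((Cm * Cmᵀ)⁻¹ * (H * Cmᵀ + Cm * Hᵀ) * (Cm * Cmᵀ)⁻¹) * Γpr).trace) +
        α * ((Γpr⁻¹ * (vecMulVec v h + vecMulVec h v)).trace +
          (Γpr⁻¹ * (H * Cmᵀ + Cm * Hᵀ)).trace) +
        α * ((ΓE⁻¹ * (vecMulVec r0 b + vecMulVec b r0)).trace +
          (ΓE⁻¹ * Fm * (H * Cmᵀ + Cm * Hᵀ) * Fmᵀ).trace)) 0 :=
    (((q1.add t1).const_mul (1 - α)).add ((q2.add t2).const_mul α)).add
      ((q3.add t3).const_mul α)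
  rw [← hLγ] at hB
  exact hB.unique hA


-- helpers from a.lean
lemma dot_swap {n m : ℕ} (M : Matrix (Fin n) (Fin m) ℝ) (a : Fin n → ℝ) (b : Fin m → ℝ) :
    a ⬝ᵥ M *ᵥ b = b ⬝ᵥ Mᵀ *ᵥ a := by
  simp only [dotProduct, mulVec, Matrix.transpose_apply, Finset.mul_sum]
  rw [Finset.sum_comm]
  exact Finset.sum_congr rfl fun i _ => Finset.sum_congr rfl fun j _ => by ring

lemma mulVec_dot {n m : ℕ} (M : Matrix (Fin m) (Fin n) ℝ) (x : Fin n → ℝ) (z : Fin m → ℝ) :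
    (M *ᵥ x) ⬝ᵥ z = x ⬝ᵥ Mᵀ *ᵥ z := by
  rw [dotProduct_comm, dot_swap]

lemma vec_eq_zero {n : ℕ} {w : Fin n → ℝ} (h : ∀ x : Fin n → ℝ, x ⬝ᵥ w = 0) : w = 0 := by
  have := h w
  rwa [dotProduct_self_eq_zero] at this

lemma mat_eq_zero {n : ℕ} {N : Matrix (Fin n) (Fin n) ℝ}
    (h : ∀ H : Matrix (Fin n) (Fin n) ℝ, (N * H).trace = 0) : N = 0 := by
  have h2 := h Nᵀ
  ext i j
  have hsum : ∑ i, ∑ j, N i j * N i j = 0 := by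
    simpa [Matrix.trace, Matrix.diag_apply, Matrix.mul_apply, Matrix.transpose_apply] using h2
  have hnn : ∀ i ∈ Finset.univ, (0:ℝ) ≤ ∑ j, N i j * N i j :=
    fun i _ => Finset.sum_nonneg fun j _ => mul_self_nonneg _
  have h3 := (Finset.sum_eq_zero_iff_of_nonneg hnn).mp hsum i (Finset.mem_univ i)
  have h4 := (Finset.sum_eq_zero_iff_of_nonneg
    (fun j _ => mul_self_nonneg (N i j))).mp h3 j (Finset.mem_univ j)
  simpa [mul_self_eq_zero] using h4

lemma trace_mul_vecMulVec' {n : ℕ} (M : Matrix (Fin n) (Fin n) ℝ) (a b : Fin n → ℝ) :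
    (M * vecMulVec a b).trace = b ⬝ᵥ M *ᵥ a := by
  simp only [Matrix.trace, Matrix.diag_apply, Matrix.mul_apply, vecMulVec_apply,
    dotProduct, mulVec, Finset.mul_sum]
  refine Finset.sum_congr rfl fun i _ => Finset.sum_congr rfl fun j _ => by ring

lemma tr_cycle3 {n : ℕ} (P G W : Matrix (Fin n) (Fin n) ℝ) :
    (-(P * G * P) * W).trace = -(((P * W * P) * G).trace) := by
  rw [Matrix.neg_mul, Matrix.trace_neg, neg_inj]
  rw [Matrix.mul_assoc (P * G) P W, Matrix.trace_mul_comm, ← Matrix.mul_assoc]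

lemma trace_sym_dir {n : ℕ} (X C H : Matrix (Fin n) (Fin n) ℝ) :
    (X * (H * Cᵀ + C * Hᵀ)).trace = ((Cᵀ * (X + Xᵀ)) * H).trace := by
  rw [Matrix.mul_add, Matrix.trace_add]
  have a1 : (X * (H * Cᵀ)).trace = ((Cᵀ * X) * H).trace := by
    rw [← Matrix.mul_assoc, Matrix.trace_mul_cycle]
  have a2 : (X * (C * Hᵀ)).trace = ((Cᵀ * Xᵀ) * H).trace := by
    calc (X * (C * Hᵀ)).trace = ((X * (C * Hᵀ))ᵀ).trace := (Matrix.trace_transpose _).symm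
      _ = ((H * Cᵀ) * Xᵀ).trace := by
            rw [Matrix.transpose_mul, Matrix.transpose_mul, Matrix.transpose_transpose]
      _ = ((Cᵀ * Xᵀ) * H).trace := by rw [Matrix.mul_assoc, Matrix.trace_mul_comm]
  rw [a1, a2, Matrix.mul_add, Matrix.add_mul, Matrix.trace_add]

lemma vecMulVec_transpose' {n : ℕ} (a b : Fin n → ℝ) :
    (vecMulVec a b)ᵀ = vecMulVec b a := by
  ext i j; simp [vecMulVec_apply, mul_comm]

lemma vecMulVec_zero_right {n m : ℕ} (a : Fin n → ℝ) :
    vecMulVec a (0 : Fin m → ℝ) = 0 := by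
  ext i j; simp [vecMulVec_apply]

lemma vecMulVec_zero_left {n m : ℕ} (a : Fin m → ℝ) :
    vecMulVec (0 : Fin n → ℝ) a = 0 := by
  ext i j; simp [vecMulVec_apply]


theorem stmt5 {D O : ℕ} (Fm : Matrix (Fin O) (Fin D) ℝ) (f y μE : Fin O → ℝ)
    (μpr : Fin D → ℝ) (Γpr : Matrix (Fin D) (Fin D) ℝ) (hΓpr : Γpr.PosDef)
    (ΓE : Matrix (Fin O) (Fin O) ℝ) (hΓE : ΓE.PosDef)
    (α : ℝ) (hα : α ∈ Set.Ioo (0 : ℝ) 1)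
    (L : (Fin D → ℝ) × (Fin D → Fin D → ℝ) → ℝ)
    (hL : ∀ p : (Fin D → ℝ) × (Fin D → Fin D → ℝ),
      L p =
        (1 - α) * ((p.1 - μpr) ⬝ᵥ (Matrix.of p.2 * (Matrix.of p.2)ᵀ)⁻¹ *ᵥ (p.1 - μpr) +
            ((Matrix.of p.2 * (Matrix.of p.2)ᵀ)⁻¹ * Γpr).trace) +
        α * ((p.1 - μpr) ⬝ᵥ Γpr⁻¹ *ᵥ (p.1 - μpr) +
            (Γpr⁻¹ * (Matrix.of p.2 * (Matrix.of p.2)ᵀ)).trace) +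
        α * ((y - μE - Fm *ᵥ p.1 - f) ⬝ᵥ ΓE⁻¹ *ᵥ (y - μE - Fm *ᵥ p.1 - f) +
            (ΓE⁻¹ * Fm * (Matrix.of p.2 * (Matrix.of p.2)ᵀ) * Fmᵀ).trace))
    (μhat : Fin D → ℝ) (Chat : Fin D → Fin D → ℝ)
    (hstat : HasFDerivAt L (0 : ((Fin D → ℝ) × (Fin D → Fin D → ℝ)) →L[ℝ] ℝ) (μhat, Chat))
    (Γhat : Matrix (Fin D) (Fin D) ℝ) (hΓhat : Γhat = Matrix.of Chat * (Matrix.of Chat)ᵀ)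
    (hΓhatPD : Γhat.PosDef)
    (A : Matrix (Fin D) (Fin D) ℝ)
    (hA : A = ((1 - α) / α) • (vecMulVec (μhat - μpr) (μhat - μpr) + Γpr))
    (μpost : Fin D → ℝ)
    (hμpost : μpost = ((1 - α) / α) •
      ((Fmᵀ * ΓE⁻¹ * Fm + Γpr⁻¹)⁻¹ *ᵥ (Γhat⁻¹ *ᵥ (μhat - μpr))) + μhat)
    (Γpost : Matrix (Fin D) (Fin D) ℝ) (hΓpost : Γpost = Γhat * A⁻¹ * Γhat)
    (ΓLap : Matrix (Fin D) (Fin D) ℝ) (hΓLap : ΓLap = (Fmᵀ * ΓE⁻¹ * Fm + Γpr⁻¹)⁻¹)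
    (uMAP : Fin D → ℝ)
    (huMAP : uMAP = ΓLap *ᵥ (Fmᵀ *ᵥ (ΓE⁻¹ *ᵥ (y - f - μE)) + Γpr⁻¹ *ᵥ μpr)) :
    μpost = uMAP ∧ Γpost = ΓLap := by
  obtain ⟨hα0, hα1⟩ := hα
  have hαne : α ≠ 0 := ne_of_gt hα0
  have hΓdet : IsUnit Γhat.det := isUnit_iff_ne_zero.mpr hΓhatPD.det_pos.ne'
  have hΓu : IsUnit Γhat := (Matrix.isUnit_iff_isUnit_det _).mpr hΓdet
  have hGu : IsUnit (Matrix.of Chat * (Matrix.of Chat)ᵀ) := hΓhat ▸ hΓu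
  have hΓprdet : IsUnit Γpr.det := isUnit_iff_ne_zero.mpr hΓpr.det_pos.ne'
  -- symmetry facts
  have htr : ∀ {k : ℕ} (M : Matrix (Fin k) (Fin k) ℝ), M.PosDef → Mᵀ = M := by
    intro k M hM
    have h1 := hM.isHermitian
    rwa [Matrix.IsHermitian, Matrix.conjTranspose_eq_transpose_of_trivial] at h1
  have hΓprInvT : (Γpr⁻¹)ᵀ = Γpr⁻¹ := by rw [Matrix.transpose_nonsing_inv, htr _ hΓpr]
  have hΓEInvT : (ΓE⁻¹)ᵀ = ΓE⁻¹ := by rw [Matrix.transpose_nonsing_inv, htr _ hΓE]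
  have hΓhatInvT : (Γhat⁻¹)ᵀ = Γhat⁻¹ := by
    rw [Matrix.transpose_nonsing_inv, htr _ hΓhatPD]
  set Cm : Matrix (Fin D) (Fin D) ℝ := Matrix.of Chat with hCm
  set v : Fin D → ℝ := μhat - μpr with hv
  set r0 : Fin O → ℝ := y - μE - Fm *ᵥ μhat - f with hr0
  set K : Matrix (Fin D) (Fin D) ℝ := Fmᵀ * ΓE⁻¹ * Fm + Γpr⁻¹ with hKdef
  have hKpd : K.PosDef := by
    rw [hKdef]
    refine Matrix.PosDef.posSemidef_add ?_ hΓpr.inv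
    have h1 : (ΓE⁻¹).PosSemidef := (hΓE.inv).posSemidef
    have h2 := h1.conjTranspose_mul_mul_same Fm
    simpa [Matrix.conjTranspose_eq_transpose_of_trivial] using h2
  have hKdet : IsUnit K.det := isUnit_iff_ne_zero.mpr hKpd.det_pos.ne'
  -- vector stationarity equation
  have hvecE : (1-α) • (Γhat⁻¹ *ᵥ v) + α • (Γpr⁻¹ *ᵥ v) - α • (Fmᵀ *ᵥ (ΓE⁻¹ *ᵥ r0)) = 0 := by
    apply vec_eq_zero
    intro x
    have k := key_deriv Fm f y μE μpr Γpr ΓE α L hL μhat Chat hstat hGu x 0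
    rw [← hΓhat] at k
    simp only [Matrix.zero_mul, Matrix.mul_zero, Matrix.transpose_zero, add_zero, zero_add,
      neg_zero, Matrix.trace_zero, Matrix.mul_add, Matrix.trace_add,
      trace_mul_vecMulVec'] at k
    rw [← hv, ← hr0] at k
    rw [dot_swap Γhat⁻¹ v x, hΓhatInvT, dot_swap Γpr⁻¹ v x, hΓprInvT] at k
    simp only [Matrix.mulVec_neg, dotProduct_neg, neg_dotProduct] at k
    rw [dot_swap ΓE⁻¹ r0 (Fm *ᵥ x), hΓEInvT] at k
    rw [mulVec_dot Fm x (ΓE⁻¹ *ᵥ r0)] at k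
    rw [dotProduct_sub, dotProduct_add]
    simp only [dotProduct_smul, smul_eq_mul]
    linear_combination k / 2
  -- matrix stationarity equation
  set S : Matrix (Fin D) (Fin D) ℝ :=
    α • K - (1-α) • (Γhat⁻¹ * (vecMulVec v v + Γpr) * Γhat⁻¹) with hSdef
  have hSsymm : Sᵀ = S := by
    rw [hSdef, Matrix.transpose_sub, Matrix.transpose_smul, Matrix.transpose_smul, hKdef]
    simp only [Matrix.transpose_add, Matrix.transpose_mul, Matrix.transpose_transpose,
      hΓprInvT, hΓEInvT, hΓhatInvT, vecMulVec_transpose', htr _ hΓpr, Matrix.mul_assoc]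
  have hstep : ∀ Hh : Matrix (Fin D) (Fin D) ℝ, ((Cmᵀ * (S + Sᵀ)) * Hh).trace = 0 := by
    intro Hh
    have k := key_deriv Fm f y μE μpr Γpr ΓE α L hL μhat Chat hstat hGu 0 Hh
    rw [← hΓhat, ← hCm, ← hv] at k
    simp only [vecMulVec_zero_right, vecMulVec_zero_left, Matrix.mulVec_zero, neg_zero,
      add_zero, zero_add, Matrix.mul_zero, Matrix.trace_zero] at k
    rw [tr_cycle3, tr_cycle3] at k
    have e4 : (ΓE⁻¹ * Fm * (Hh * Cmᵀ + Cm * Hhᵀ) * Fmᵀ).trace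
        = ((Fmᵀ * ΓE⁻¹ * Fm) * (Hh * Cmᵀ + Cm * Hhᵀ)).trace := by
      rw [Matrix.trace_mul_cycle, ← Matrix.mul_assoc]
    rw [e4] at k
    simp only [Matrix.mul_add, Matrix.trace_add, neg_add] at k
    rw [← trace_sym_dir]
    rw [hSdef, hKdef]
    simp only [Matrix.sub_mul, Matrix.smul_mul, Matrix.add_mul, Matrix.mul_add,
      Matrix.trace_add, Matrix.trace_sub, Matrix.trace_smul, smul_eq_mul]
    linear_combination k
  have hCS : Cmᵀ * (S + Sᵀ) = 0 := mat_eq_zero hstep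
  have hCmS : Cmᵀ * S = 0 := by
    rw [hSsymm, Matrix.mul_add] at hCS
    have h3 : (2:ℝ) • (Cmᵀ * S) = 0 := by rw [two_smul]; exact hCS
    have h4 := congrArg (fun M : Matrix (Fin D) (Fin D) ℝ => ((2:ℝ)⁻¹) • M) h3
    simpa [smul_smul, inv_mul_cancel₀ (two_ne_zero (α := ℝ))] using h4
  have hSC : S * Cm = 0 := by
    have h1 := congrArg Matrix.transpose hCmS
    rwa [Matrix.transpose_mul, Matrix.transpose_transpose, hSsymm, Matrix.transpose_zero] at h1
  have hSΓ : S * Γhat = 0 := by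
    rw [hΓhat, ← Matrix.mul_assoc, hSC, Matrix.zero_mul]
  have hS0 : S = 0 := by
    have h1 : S * Γhat * Γhat⁻¹ = 0 * Γhat⁻¹ := by rw [hSΓ]
    rwa [Matrix.mul_nonsing_inv_cancel_right _ _ hΓdet, Matrix.zero_mul] at h1
  have hE2 : α • K = (1-α) • (Γhat⁻¹ * (vecMulVec v v + Γpr) * Γhat⁻¹) := by
    have := sub_eq_zero.mp hS0
    exact this
  -- covariance conclusion
  have hWΓ : (1-α) • (vecMulVec v v + Γpr) = α • (Γhat * K * Γhat) := by
    have h1 := congrArg (fun M => Γhat * M * Γhat) hE2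
    simp only [Matrix.mul_smul, Matrix.smul_mul] at h1
    have e : Γhat * (Γhat⁻¹ * (vecMulVec v v + Γpr) * Γhat⁻¹) * Γhat
        = vecMulVec v v + Γpr := by
      rw [← Matrix.mul_assoc, Matrix.mul_nonsing_inv_cancel_left _ _ hΓdet,
        Matrix.nonsing_inv_mul_cancel_right _ _ hΓdet]
    rw [e] at h1
    exact h1.symm
  have hAeq : A = Γhat * K * Γhat := by
    have h1 : α • A = α • (Γhat * K * Γhat) := by
      rw [hA, smul_smul]
      have : α * ((1 - α) / α) = 1 - α := by field_simp
      rw [this]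
      exact hWΓ
    have h2 := congrArg (fun M : Matrix (Fin D) (Fin D) ℝ => α⁻¹ • M) h1
    simpa [smul_smul, inv_mul_cancel₀ hαne] using h2
  have hΓfin : Γpost = ΓLap := by
    rw [hΓpost, hAeq, Matrix.mul_inv_rev, Matrix.mul_inv_rev,
      Matrix.mul_nonsing_inv_cancel_left _ _ hΓdet,
      Matrix.nonsing_inv_mul_cancel_right _ _ hΓdet, hΓLap]
  -- mean conclusion
  have hKK : K * K⁻¹ = 1 := Matrix.mul_nonsing_inv _ hKdet
  have hKiK : K⁻¹ * K = 1 := Matrix.nonsing_inv_mul _ hKdet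
  have hz : ((1-α)/α) • (Γhat⁻¹ *ᵥ v) = Fmᵀ *ᵥ (ΓE⁻¹ *ᵥ r0) - Γpr⁻¹ *ᵥ v := by
    have h1 : (1-α) • (Γhat⁻¹ *ᵥ v) = α • (Fmᵀ *ᵥ (ΓE⁻¹ *ᵥ r0)) - α • (Γpr⁻¹ *ᵥ v) := by
      have h2 : (1-α) • (Γhat⁻¹ *ᵥ v) + α • (Γpr⁻¹ *ᵥ v) = α • (Fmᵀ *ᵥ (ΓE⁻¹ *ᵥ r0)) :=
        sub_eq_zero.mp hvecE
      rw [← h2]; abel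
    rw [div_eq_inv_mul, ← smul_smul, h1, smul_sub, smul_smul, smul_smul,
      inv_mul_cancel₀ hαne, one_smul, one_smul]
  have hμfin : μpost = uMAP := by
    have hKμ : K *ᵥ μpost = K *ᵥ uMAP := by
      rw [hμpost, huMAP, hΓLap]
      have e0 : ∀ w : Fin D → ℝ, K *ᵥ (K⁻¹ *ᵥ w) = w := fun w => by
        rw [Matrix.mulVec_mulVec, hKK, Matrix.one_mulVec]
      have e1 : K *ᵥ (((1-α)/α) • (K⁻¹ *ᵥ (Γhat⁻¹ *ᵥ v)) + μhat)
          = ((1-α)/α) • (Γhat⁻¹ *ᵥ v) + K *ᵥ μhat := by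
        rw [Matrix.mulVec_add, Matrix.mulVec_smul, e0]
      rw [e1, e0, hz, hKdef]
      simp only [Matrix.add_mulVec, ← Matrix.mulVec_mulVec, hr0, hv,
        Matrix.mulVec_sub, Matrix.mulVec_add]
      abel
    have h1 := congrArg (fun x => K⁻¹ *ᵥ x) hKμ
    simpa [Matrix.mulVec_mulVec, hKiK, Matrix.one_mulVec] using h1
  exact ⟨hμfin, hΓfin⟩
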